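/- If the random horizon τ takes values in {0,...,N}, is independent of the price process S, and S is a square-integrable martingale, then the quadratic-pricing-optimal initial capital for the claim H_τ equals c* = ∑_{n=0}^{N} E[H_n] · P(τ = n), i.e., the minimizer over c of min_ξ E[(H_τ - c - G_τ(ξ))^2] is the expected claim value weighted by the horizon distribution. -/

import Mathlib

open MeasureTheory ProbabilityTheory

/-- Gain process of a strategy `ψ`: `G_n(ψ) = ∑_{k=1}^n ψ_k ΔS_k` (so `G_0 = 0`). -/
def gain {Ω : Type*} (ΔS ψ : ℕ → Ω → ℝ) (n : ℕ) (x : Ω) : ℝ :=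
  ∑ k ∈ Finset.Icc 1 n, ψ k x * ΔS k x

lemma step_int {Ω : Type*} {m0 : MeasurableSpace Ω} {μ : Measure Ω} [IsProbabilityMeasure μ]
    {m : MeasurableSpace Ω} (hm : m ≤ m0) {A B D : Ω → ℝ}
    (hA : StronglyMeasurable[m] A) (hB : StronglyMeasurable[m] B)
    (hD : Integrable D μ) (hD0 : μ[D|m] =ᵐ[μ] 0)
    (h : Integrable (fun x => A x + B x * D x) μ) :
    Integrable A μ ∧ ∫ x, (A x + B x * D x) ∂μ = ∫ x, A x ∂μ := by
  classical
  -- the truncation functions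
  set g : ℕ → Ω → ℝ := fun M x =>
    if |A x| ≤ (M : ℝ) ∧ |B x| ≤ (M : ℝ) then (if 0 ≤ A x then 1 else -1) else 0 with hg
  have hAm : Measurable[m] A := hA.measurable
  have hBm : Measurable[m] B := hB.measurable
  have hgmeas : ∀ M, Measurable[m] (g M) := by
    intro M
    apply Measurable.ite
    · exact (measurableSet_le hAm.abs measurable_const).inter
        (measurableSet_le hBm.abs measurable_const)
    · exact Measurable.ite (measurableSet_le measurable_const hAm) measurable_const
        measurable_const
    · exact measurable_const
  have hgbd : ∀ M x, ‖g M x‖ ≤ 1 := by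
    intro M x
    simp only [hg, Real.norm_eq_abs]
    split_ifs <;> norm_num
  -- each ∫ g M * (A + B D) = ∫ indicator |A|
  have hgABD_int : ∀ M, Integrable (fun x => g M x * (A x + B x * D x)) μ := by
    intro M
    exact h.bdd_mul ((hgmeas M).mono hm le_rfl).aestronglyMeasurable (c := 1) (ae_of_all _ fun x => hgbd M x)
  have hgB_bd : ∀ M x, ‖g M x * B x‖ ≤ (M : ℝ) := by
    intro M x
    simp only [hg, Real.norm_eq_abs]
    split_ifs with h1 h2
    · rw [abs_mul]; simpa using h1.2
    · rw [abs_mul]; rw [abs_neg, abs_one]; simpa using h1.2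
    · simp
  have hgBD_int : ∀ M, Integrable (fun x => (g M x * B x) * D x) μ := by
    intro M
    exact hD.bdd_mul (((hgmeas M).mul hBm).mono hm le_rfl).aestronglyMeasurable
      (c := M) (ae_of_all _ fun x => hgB_bd M x)
  have hgBD_zero : ∀ M, ∫ x, (g M x * B x) * D x ∂μ = 0 := by
    intro M
    have hce : μ[(fun x => g M x * B x) * D|m] =ᵐ[μ] (fun x => g M x * B x) * μ[D|m] :=
      condExp_mul_of_stronglyMeasurable_left (((hgmeas M).mul hBm).stronglyMeasurable)
        (hgBD_int M) hD
    have h0 : μ[(fun x => g M x * B x) * D|m] =ᵐ[μ] 0 := by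
      refine hce.trans ?_
      filter_upwards [hD0] with x hx
      simp [hx]
    have := integral_condExp (μ := μ) hm (m := m) (f := (fun x => g M x * B x) * D)
    rw [integral_congr_ae h0] at this
    simpa [Pi.mul_apply, integral_zero] using this.symm
  -- the truncated absolute values
  set F : ℕ → Ω → ℝ := fun M x =>
    if |A x| ≤ (M : ℝ) ∧ |B x| ≤ (M : ℝ) then |A x| else 0 with hF
  have hFgA : ∀ M x, F M x = g M x * A x := by
    intro M x
    simp only [hF, hg]
    split_ifs with h1 h2
    · rw [one_mul, abs_of_nonneg h2]
    · rw [neg_one_mul, abs_of_neg (lt_of_not_ge h2)]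
    · rw [zero_mul]
  have hFint : ∀ M, Integrable (F M) μ := by
    intro M
    have : Integrable (fun x => g M x * (A x + B x * D x) - (g M x * B x) * D x) μ :=
      (hgABD_int M).sub (hgBD_int M)
    refine this.congr (Filter.Eventually.of_forall fun x => ?_)
    rw [hFgA]
    ring
  have hFle : ∀ M, ∫ x, F M x ∂μ ≤ ∫ x, |A x + B x * D x| ∂μ := by
    intro M
    have hint : ∫ x, F M x ∂μ = ∫ x, g M x * (A x + B x * D x) ∂μ := by
      have : ∫ x, g M x * (A x + B x * D x) ∂μ
          = ∫ x, (F M x + (g M x * B x) * D x) ∂μ := by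
        refine integral_congr_ae (Filter.Eventually.of_forall fun x => ?_)
        show g M x * (A x + B x * D x) = F M x + (g M x * B x) * D x
        rw [hFgA]; ring
      rw [this, integral_add (hFint M) (hgBD_int M), hgBD_zero M, add_zero]
    rw [hint]
    refine integral_mono (hgABD_int M) h.abs fun x => ?_
    calc g M x * (A x + B x * D x) ≤ |g M x * (A x + B x * D x)| := le_abs_self _
    _ ≤ |A x + B x * D x| := by
        rw [abs_mul]
        exact mul_le_of_le_one_left (abs_nonneg _) (hgbd M x)
  -- conclude A integrable by monotone convergence
  have hAint : Integrable A μ := by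
    refine ⟨(hA.mono hm).aestronglyMeasurable, ?_⟩
    rw [hasFiniteIntegral_iff_norm]
    have hsup : ∀ x, (⨆ M : ℕ, ENNReal.ofReal (F M x)) = ENNReal.ofReal ‖A x‖ := by
      intro x
      refine le_antisymm (iSup_le fun M => ?_) ?_
      · refine ENNReal.ofReal_le_ofReal ?_
        simp only [hF, Real.norm_eq_abs]
        split_ifs
        · exact le_rfl
        · exact abs_nonneg _
      · refine le_iSup_of_le ⌈max |A x| |B x|⌉₊ ?_
        refine ENNReal.ofReal_le_ofReal ?_
        simp only [hF, Real.norm_eq_abs]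
        rw [if_pos]
        constructor
        · exact (le_max_left _ _).trans (Nat.le_ceil _)
        · exact (le_max_right _ _).trans (Nat.le_ceil _)
    have hmono : Monotone fun M : ℕ => fun x => ENNReal.ofReal (F M x) := by
      intro M M' hMM' x
      refine ENNReal.ofReal_le_ofReal ?_
      simp only [hF]
      split_ifs with h1 h2
      · exact le_rfl
      · exact absurd ⟨h1.1.trans (by exact_mod_cast hMM'), h1.2.trans (by exact_mod_cast hMM')⟩ h2
      · exact abs_nonneg _
      · exact le_rfl
    have hmeasF : ∀ M : ℕ, Measurable[m] fun x => ENNReal.ofReal (F M x) := by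
      intro M
      refine ENNReal.measurable_ofReal.comp ?_
      refine Measurable.ite ?_ hAm.abs measurable_const
      exact (measurableSet_le hAm.abs measurable_const).inter
        (measurableSet_le hBm.abs measurable_const)
    calc ∫⁻ x, ENNReal.ofReal ‖A x‖ ∂μ
        = ∫⁻ x, ⨆ M : ℕ, ENNReal.ofReal (F M x) ∂μ := by
          refine lintegral_congr fun x => (hsup x).symm
      _ = ⨆ M : ℕ, ∫⁻ x, ENNReal.ofReal (F M x) ∂μ := lintegral_iSup (fun M => (hmeasF M).mono hm le_rfl) hmono
      _ ≤ ENNReal.ofReal (∫ x, |A x + B x * D x| ∂μ) := by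
          refine iSup_le fun M => ?_
          rw [← ofReal_integral_eq_lintegral_ofReal (hFint M)
            (Filter.Eventually.of_forall fun x => ?_)]
          · exact ENNReal.ofReal_le_ofReal (hFle M)
          · simp only [hF]
            split_ifs
            · exact abs_nonneg _
            · exact le_rfl
      _ < ⊤ := ENNReal.ofReal_lt_top
  -- now the integral identity
  have hBD : Integrable (fun x => B x * D x) μ := by
    have := h.sub hAint
    refine this.congr (Filter.Eventually.of_forall fun x => ?_)
    simp only [Pi.sub_apply]
    ring
  have hBD0 : ∫ x, B x * D x ∂μ = 0 := by
    have hce : μ[B * D|m] =ᵐ[μ] B * μ[D|m] :=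
      condExp_mul_of_stronglyMeasurable_left hB hBD hD
    have h0 : μ[B * D|m] =ᵐ[μ] 0 := by
      refine hce.trans ?_
      filter_upwards [hD0] with x hx
      simp [hx]
    have := integral_condExp (μ := μ) hm (m := m) (f := B * D)
    rw [integral_congr_ae h0] at this
    simpa [Pi.mul_apply, integral_zero] using this.symm
  refine ⟨hAint, ?_⟩
  rw [integral_add hAint hBD, hBD0, add_zero]

lemma gain_sm {Ω : Type*} {m0 : MeasurableSpace Ω} (ℱ : Filtration ℕ m0)
    {ΔS ξ : ℕ → Ω → ℝ} (hSa : ∀ n, StronglyMeasurable[ℱ n] (ΔS n))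
    (hξ : ∀ i, StronglyMeasurable[ℱ (i - 1)] (ξ i)) (n : ℕ) :
    StronglyMeasurable[ℱ n] (gain ΔS ξ n) := by
  have : (gain ΔS ξ n) = fun x => ∑ k ∈ Finset.Icc 1 n, ξ k x * ΔS k x := rfl
  rw [this]
  refine Finset.stronglyMeasurable_fun_sum _ fun k hk => ?_
  have hkn : k ≤ n := (Finset.mem_Icc.mp hk).2
  exact ((hξ k).mono (ℱ.mono ((Nat.sub_le k 1).trans hkn))).mul ((hSa k).mono (ℱ.mono hkn))

lemma gain_integral {Ω : Type*} {m0 : MeasurableSpace Ω} {μ : Measure Ω}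
    [IsProbabilityMeasure μ] {N : ℕ} (ℱ : Filtration ℕ m0) {ΔS ξ : ℕ → Ω → ℝ}
    (hSa : ∀ n, StronglyMeasurable[ℱ n] (ΔS n))
    (hS1 : ∀ n, Integrable (ΔS n) μ)
    (hmart : ∀ n ∈ Finset.Icc 1 N, μ[ΔS n | ℱ (n - 1)] =ᵐ[μ] 0)
    (hξ : ∀ i, StronglyMeasurable[ℱ (i - 1)] (ξ i)) :
    ∀ n, n ≤ N → Integrable (gain ΔS ξ n) μ → ∫ x, gain ΔS ξ n x ∂μ = 0 := by
  intro n
  induction n with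
  | zero =>
    intro _ _
    simp [gain]
  | succ n ih =>
    intro hnN hint
    have hdecomp : ∀ x, gain ΔS ξ (n + 1) x = gain ΔS ξ n x + ξ (n + 1) x * ΔS (n + 1) x := by
      intro x
      simp only [gain]
      rw [Finset.sum_Icc_succ_top (Nat.one_le_iff_ne_zero.mpr (Nat.succ_ne_zero n))]
    have hint' : Integrable (fun x => gain ΔS ξ n x + ξ (n + 1) x * ΔS (n + 1) x) μ := by
      refine hint.congr (Filter.Eventually.of_forall fun x => (hdecomp x))
    have hstep := step_int (ℱ.le n) (gain_sm ℱ hSa hξ n)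
      (by simpa using hξ (n + 1)) (hS1 (n + 1))
      (by simpa using hmart (n + 1) (Finset.mem_Icc.mpr ⟨Nat.succ_le_succ (Nat.zero_le n), hnN⟩))
      hint'
    have h1 : ∫ x, gain ΔS ξ (n + 1) x ∂μ
        = ∫ x, (gain ΔS ξ n x + ξ (n + 1) x * ΔS (n + 1) x) ∂μ :=
      integral_congr_ae (Filter.Eventually.of_forall fun x => hdecomp x)
    rw [h1, hstep.2, ih (Nat.le_of_succ_le hnN) hstep.1]

lemma indepFun_of_indep {Ω : Type*} {m0 : MeasurableSpace Ω} {μ : Measure Ω}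
    {m₁ m₂ : MeasurableSpace Ω} (h : Indep m₁ m₂ μ) {β γ : Type*}
    [MeasurableSpace β] [MeasurableSpace γ] {f : Ω → β} {g : Ω → γ}
    (hf : Measurable[m₁] f) (hg : Measurable[m₂] g) : IndepFun f g μ :=
  indep_of_indep_of_le_left (indep_of_indep_of_le_right h hg.comap_le) hf.comap_le

/-- Quadratic pricing under an independent random horizon: if `τ` takes values in
`{0,…,N}`, is independent of `F_N`, and `S` is a square-integrable martingale, then
`c* = ∑_{n=0}^N E[H_n] P(τ = n)` minimizes
`c ↦ inf_ξ E[(H_τ - c - G_τ(ξ))²]` over `c ∈ ℝ` (the infimum being over predictable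
strategies `ξ`). -/
theorem stmt_19 {Ω : Type*} {m0 : MeasurableSpace Ω} (μ : Measure Ω) [IsProbabilityMeasure μ]
    (N : ℕ) (ℱ : Filtration ℕ m0) (ΔS H : ℕ → Ω → ℝ) (τ : Ω → ℕ)
    (hSa : ∀ n, StronglyMeasurable[ℱ n] (ΔS n))
    (hS2 : ∀ n, MemLp (ΔS n) 2 μ)
    (hmart : ∀ n ∈ Finset.Icc 1 N, μ[ΔS n | ℱ (n - 1)] =ᵐ[μ] 0)
    (hHa : ∀ n, StronglyMeasurable[ℱ n] (H n))
    (hH2 : ∀ n, MemLp (H n) 2 μ)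
    (hτmeas : Measurable τ)
    (hτN : ∀ x, τ x ≤ N)
    (hτindep : Indep (MeasurableSpace.comap τ ⊤) (ℱ N) μ)
    (V : ℝ → ℝ)
    (hV : ∀ c, V c = sInf { y : ℝ | ∃ ξ : ℕ → Ω → ℝ,
      (∀ i, StronglyMeasurable[ℱ (i - 1)] (ξ i)) ∧
      Integrable (fun x => (H (τ x) x - c - gain ΔS ξ (τ x) x) ^ 2) μ ∧
      y = ∫ x, (H (τ x) x - c - gain ΔS ξ (τ x) x) ^ 2 ∂μ }) :
    ∀ c : ℝ,
      V (∑ n ∈ Finset.range (N + 1), (∫ x, H n x ∂μ) * (μ {x | τ x = n}).toReal) ≤ V c := by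
  classical
  intro c
  set c' : ℝ := ∑ n ∈ Finset.range (N + 1), (∫ x, H n x ∂μ) * (μ {x | τ x = n}).toReal with hc'
  have hS1 : ∀ n, Integrable (ΔS n) μ := fun n => (hS2 n).integrable one_le_two
  have hH1 : ∀ n, Integrable (H n) μ := fun n => (hH2 n).integrable one_le_two
  have hAn_meas : ∀ n : ℕ, MeasurableSet {x | τ x = n} := fun n =>
    hτmeas (measurableSet_singleton n)
  -- the sum of the horizon probabilities is 1
  have hsum1 : ∑ n ∈ Finset.range (N + 1), (μ {x | τ x = n}).toReal = 1 := by
    have hdisj : (↑(Finset.range (N + 1)) : Set ℕ).PairwiseDisjoint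
        (fun n => {x | τ x = n}) := by
      intro a _ b _ hab
      refine Set.disjoint_left.mpr fun x hxa hxb => ?_
      exact hab (hxa.symm.trans hxb)
    have hunion : (⋃ n ∈ Finset.range (N + 1), {x | τ x = n}) = Set.univ := by
      ext x
      simp only [Set.mem_iUnion, Set.mem_setOf_eq, Finset.mem_range, Set.mem_univ, iff_true]
      exact ⟨τ x, Nat.lt_succ_of_le (hτN x), rfl⟩
    have hμ : ∑ n ∈ Finset.range (N + 1), μ {x | τ x = n} = 1 := by
      rw [← measure_biUnion_finset hdisj fun n _ => hAn_meas n, hunion, measure_univ]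
    rw [← ENNReal.toReal_sum (fun n _ => measure_ne_top μ _), hμ, ENNReal.toReal_one]
  -- key computation: the mean of the hedged claim
  have key : ∀ (b : ℝ) (ξ : ℕ → Ω → ℝ), (∀ i, StronglyMeasurable[ℱ (i - 1)] (ξ i)) →
      Integrable (fun x => (H (τ x) x - b - gain ΔS ξ (τ x) x) ^ 2) μ →
      MemLp (fun x => H (τ x) x - b - gain ΔS ξ (τ x) x) 2 μ ∧
        ∫ x, (H (τ x) x - b - gain ΔS ξ (τ x) x) ∂μ = c' - b := by
    intro b ξ hξ hsq
    set W : ℕ → Ω → ℝ := fun n x => H n x - b - gain ΔS ξ n x with hWdef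
    set f : Ω → ℝ := fun x => H (τ x) x - b - gain ΔS ξ (τ x) x with hfdef
    have hWsm : ∀ n, StronglyMeasurable[ℱ n] (W n) := fun n =>
      ((hHa n).sub stronglyMeasurable_const).sub (gain_sm ℱ hSa hξ n)
    have hfsum : ∀ x, f x
        = ∑ n ∈ Finset.range (N + 1), Set.indicator {y | τ y = n} (W n) x := by
      intro x
      rw [Finset.sum_eq_single_of_mem (τ x)
        (Finset.mem_range.mpr (Nat.lt_succ_of_le (hτN x)))]
      · rw [Set.indicator_of_mem (by exact rfl : x ∈ {y | τ y = τ x})]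
      · intro n _ hne
        exact Set.indicator_of_notMem
          (show x ∉ {y | τ y = n} from fun hx => hne (Eq.symm hx)) _
    have hfsm : AEStronglyMeasurable f μ := by
      have : StronglyMeasurable f := by
        rw [show f = fun x => ∑ n ∈ Finset.range (N + 1),
            Set.indicator {y | τ y = n} (W n) x from funext hfsum]
        exact Finset.stronglyMeasurable_fun_sum _ fun n _ =>
          ((hWsm n).mono (ℱ.le n)).indicator (hAn_meas n)
      exact this.aestronglyMeasurable
    have hf2 : MemLp f 2 μ := (memLp_two_iff_integrable_sq hfsm).mpr hsq
    have hf1 : Integrable f μ := hf2.integrable one_le_two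
    refine ⟨hf2, ?_⟩
    have hind_eq : ∀ n, Set.indicator {y | τ y = n} (W n)
        = Set.indicator {y | τ y = n} f := by
      intro n
      funext x
      by_cases hx : τ x = n
      · rw [Set.indicator_of_mem (show x ∈ {y | τ y = n} from hx),
          Set.indicator_of_mem (show x ∈ {y | τ y = n} from hx)]
        simp only [hfdef, hWdef, hx]
      · rw [Set.indicator_of_notMem (show x ∉ {y | τ y = n} from hx),
          Set.indicator_of_notMem (show x ∉ {y | τ y = n} from hx)]
    have hind_int : ∀ n, Integrable (Set.indicator {y | τ y = n} (W n)) μ := by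
      intro n
      rw [hind_eq n]
      exact hf1.indicator (hAn_meas n)
    have hint_f : ∫ x, f x ∂μ
        = ∑ n ∈ Finset.range (N + 1), ∫ x, Set.indicator {y | τ y = n} (W n) x ∂μ := by
      rw [show f = fun x => ∑ n ∈ Finset.range (N + 1),
          Set.indicator {y | τ y = n} (W n) x from funext hfsum]
      exact integral_finset_sum _ fun n _ => hind_int n
    have hterm : ∀ n ∈ Finset.range (N + 1),
        ∫ x, Set.indicator {y | τ y = n} (W n) x ∂μ
          = ((∫ x, H n x ∂μ) - b) * (μ {x | τ x = n}).toReal := by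
      intro n hn
      have hnN : n ≤ N := Nat.lt_succ_iff.mp (Finset.mem_range.mp hn)
      set i : Ω → ℝ := fun x => if τ x = n then 1 else 0 with hidef
      have hprod : (fun x => i x * W n x) = Set.indicator {y | τ y = n} (W n) := by
        funext x
        by_cases hx : τ x = n
        · rw [Set.indicator_of_mem (show x ∈ {y | τ y = n} from hx)]
          simp [hidef, hx]
        · rw [Set.indicator_of_notMem (show x ∉ {y | τ y = n} from hx)]
          simp [hidef, hx]
      by_cases h0 : μ {x | τ x = n} = 0
      · have hae : Set.indicator {y | τ y = n} (W n) =ᵐ[μ] 0 := by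
          have : ∀ᵐ x ∂μ, x ∉ {y | τ y = n} := measure_eq_zero_iff_ae_notMem.mp h0
          filter_upwards [this] with x hx
          rw [Set.indicator_of_notMem (show x ∉ {y | τ y = n} from hx)]
          rfl
        rw [integral_congr_ae hae]
        simp [h0]
      · -- independence argument
        have him0 : Measurable i := by
          exact Measurable.ite (hAn_meas n) measurable_const measurable_const
        have hτm' : Measurable[MeasurableSpace.comap τ ⊤] τ := fun s _ => ⟨s, trivial, rfl⟩
        have him : Measurable[MeasurableSpace.comap τ ⊤] i := by
          have : i = (fun k : ℕ => if k = n then (1 : ℝ) else 0) ∘ τ := rfl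
          rw [this]
          exact measurable_from_top.comp hτm'
        have hWm : Measurable[ℱ N] (W n) := ((hWsm n).mono (ℱ.mono hnN)).measurable
        have hIndep : IndepFun i (W n) μ := indepFun_of_indep hτindep him hWm
        have hiW_int : Integrable (fun x => i x * W n x) μ := by
          rw [hprod]; exact hind_int n
        have hine0 : ¬ i =ᵐ[μ] 0 := by
          intro hae
          apply h0
          have : {x | τ x = n} ⊆ {x | i x ≠ 0} := by
            intro x hx
            simp [hidef, Set.mem_setOf_eq.mp hx]
          refine measure_mono_null this ?_
          simpa [Filter.EventuallyEq, ae_iff] using hae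
        have hWint : Integrable (W n) μ :=
          hIndep.integrable_right_of_integrable_op (· * ·) 1 one_ne_zero
            (fun x y => by simp [enorm_mul]) hiW_int
            him0.aestronglyMeasurable ((hWm.mono (ℱ.le N) le_rfl).aestronglyMeasurable) hine0
        have hgain_int : Integrable (gain ΔS ξ n) μ := by
          have : Integrable (fun x => H n x - b - W n x) μ :=
            ((hH1 n).sub (integrable_const b)).sub hWint
          refine this.congr (Filter.Eventually.of_forall fun x => ?_)
          simp only [hWdef]
          ring
        have hgain0 : ∫ x, gain ΔS ξ n x ∂μ = 0 :=
          gain_integral ℱ hSa hS1 hmart hξ n hnN hgain_int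
        have hWval : ∫ x, W n x ∂μ = (∫ x, H n x ∂μ) - b := by
          have e1 : ∫ x, ((H n x - b) - gain ΔS ξ n x) ∂μ
              = (∫ x, (H n x - b) ∂μ) - ∫ x, gain ΔS ξ n x ∂μ :=
            integral_sub ((hH1 n).sub (integrable_const b)) hgain_int
          have e2 : ∫ x, (H n x - b) ∂μ = (∫ x, H n x ∂μ) - ∫ x, (b : ℝ) ∂μ :=
            integral_sub (hH1 n) (integrable_const b)
          calc ∫ x, W n x ∂μ = ∫ x, ((H n x - b) - gain ΔS ξ n x) ∂μ := rfl
            _ = (∫ x, H n x ∂μ) - ∫ x, (b : ℝ) ∂μ - ∫ x, gain ΔS ξ n x ∂μ := by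
                rw [e1, e2]
            _ = (∫ x, H n x ∂μ) - b := by
                rw [hgain0, sub_zero, integral_const]
                simp
        have hival : ∫ x, i x ∂μ = (μ {x | τ x = n}).toReal := by
          have : i = Set.indicator {y | τ y = n} (fun _ => (1 : ℝ)) := by
            funext x
            by_cases hx : τ x = n
            · rw [Set.indicator_of_mem (show x ∈ {y | τ y = n} from hx)]
              simp [hidef, hx]
            · rw [Set.indicator_of_notMem (show x ∉ {y | τ y = n} from hx)]
              simp [hidef, hx]
          rw [this, integral_indicator (hAn_meas n)]
          simp [measureReal_def]
        calc ∫ x, Set.indicator {y | τ y = n} (W n) x ∂μ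
            = ∫ x, i x * W n x ∂μ := by rw [hprod]
          _ = (∫ x, i x ∂μ) * ∫ x, W n x ∂μ :=
              hIndep.integral_mul_eq_mul_integral him0.aestronglyMeasurable
                ((hWm.mono (ℱ.le N) le_rfl).aestronglyMeasurable)
          _ = ((∫ x, H n x ∂μ) - b) * (μ {x | τ x = n}).toReal := by
              rw [hival, hWval, mul_comm]
    rw [hint_f, Finset.sum_congr rfl hterm]
    simp only [sub_mul]
    rw [Finset.sum_sub_distrib, ← Finset.mul_sum, hsum1, mul_one, ← hc']
  -- now the comparison of the two infima
  rw [hV c, hV c']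
  have hbdd : ∀ b : ℝ, BddBelow { y : ℝ | ∃ ξ : ℕ → Ω → ℝ,
      (∀ i, StronglyMeasurable[ℱ (i - 1)] (ξ i)) ∧
      Integrable (fun x => (H (τ x) x - b - gain ΔS ξ (τ x) x) ^ 2) μ ∧
      y = ∫ x, (H (τ x) x - b - gain ΔS ξ (τ x) x) ^ 2 ∂μ } := by
    intro b
    refine ⟨0, fun y hy => ?_⟩
    obtain ⟨ξ, -, -, rfl⟩ := hy
    exact integral_nonneg fun x => sq_nonneg _
  refine le_csInf ?_ ?_
  · -- nonempty: the zero strategy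
    have hg0 : ∀ n x, gain ΔS (fun _ _ => (0 : ℝ)) n x = 0 := by
      intro n x
      simp [gain]
    have hHτ : MemLp (fun x => H (τ x) x) 2 μ := by
      have heq : (fun x => H (τ x) x)
          = fun x => ∑ n ∈ Finset.range (N + 1), Set.indicator {y | τ y = n} (H n) x := by
        funext x
        rw [Finset.sum_eq_single_of_mem (τ x)
          (Finset.mem_range.mpr (Nat.lt_succ_of_le (hτN x)))]
        · rw [Set.indicator_of_mem (show x ∈ {y | τ y = τ x} from rfl)]
        · intro n _ hne
          exact Set.indicator_of_notMem
            (show x ∉ {y | τ y = n} from fun hx => hne (Eq.symm hx)) _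
      rw [heq]
      have hsum := memLp_finset_sum' (Finset.range (N + 1))
        (fun n (_ : n ∈ Finset.range (N + 1)) => (hH2 n).indicator (hAn_meas n))
      refine MemLp.ae_eq (Filter.Eventually.of_forall fun x => ?_) hsum
      simp [Finset.sum_apply]
    have heq2 : (fun x => H (τ x) x - c - gain ΔS (fun _ _ => (0 : ℝ)) (τ x) x)
        = fun x => H (τ x) x - c := by
      funext x
      rw [hg0, sub_zero]
    have hint0 : Integrable
        (fun x => (H (τ x) x - c - gain ΔS (fun _ _ => (0 : ℝ)) (τ x) x) ^ 2) μ := by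
      have hmem : MemLp (fun x => H (τ x) x - c - gain ΔS (fun _ _ => (0 : ℝ)) (τ x) x) 2 μ := by
        rw [heq2]
        exact hHτ.sub (memLp_const c)
      exact hmem.integrable_sq
    exact ⟨_, fun _ _ => (0 : ℝ), fun _ => stronglyMeasurable_const, hint0, rfl⟩
  · rintro y ⟨ξ, hξm, hint, rfl⟩
    obtain ⟨hf2, hfval⟩ := key c ξ hξm hint
    have hf1 : Integrable (fun x => H (τ x) x - c - gain ΔS ξ (τ x) x) μ :=
      hf2.integrable one_le_two
    set d : ℝ := c - c' with hd
    have hpt : ∀ x, H (τ x) x - c' - gain ΔS ξ (τ x) x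
        = (H (τ x) x - c - gain ΔS ξ (τ x) x) + d := by
      intro x
      rw [hd]
      ring
    have hf2' : MemLp (fun x => H (τ x) x - c' - gain ΔS ξ (τ x) x) 2 μ := by
      rw [show (fun x => H (τ x) x - c' - gain ΔS ξ (τ x) x)
          = fun x => (H (τ x) x - c - gain ΔS ξ (τ x) x) + d from funext hpt]
      exact hf2.add (memLp_const d)
    have hintsq' : Integrable (fun x => (H (τ x) x - c' - gain ΔS ξ (τ x) x) ^ 2) μ :=
      hf2'.integrable_sq
    have hmem : (∫ x, (H (τ x) x - c' - gain ΔS ξ (τ x) x) ^ 2 ∂μ) ∈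
        { y : ℝ | ∃ ξ : ℕ → Ω → ℝ,
          (∀ i, StronglyMeasurable[ℱ (i - 1)] (ξ i)) ∧
          Integrable (fun x => (H (τ x) x - c' - gain ΔS ξ (τ x) x) ^ 2) μ ∧
          y = ∫ x, (H (τ x) x - c' - gain ΔS ξ (τ x) x) ^ 2 ∂μ } :=
      ⟨ξ, hξm, hintsq', rfl⟩
    refine (csInf_le (hbdd c') hmem).trans ?_
    -- expand the square
    have hexp : ∫ x, (H (τ x) x - c' - gain ΔS ξ (τ x) x) ^ 2 ∂μ
        = ∫ x, (H (τ x) x - c - gain ΔS ξ (τ x) x) ^ 2 ∂μ - d ^ 2 := by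
      have h1 : ∀ x, (H (τ x) x - c' - gain ΔS ξ (τ x) x) ^ 2
          = (H (τ x) x - c - gain ΔS ξ (τ x) x) ^ 2
            + (2 * d) * (H (τ x) x - c - gain ΔS ξ (τ x) x) + d ^ 2 := by
        intro x
        rw [hpt x]
        ring
      have e1 : ∫ x, ((H (τ x) x - c - gain ΔS ξ (τ x) x) ^ 2
            + (2 * d) * (H (τ x) x - c - gain ΔS ξ (τ x) x) + d ^ 2) ∂μ
          = (∫ x, ((H (τ x) x - c - gain ΔS ξ (τ x) x) ^ 2
            + (2 * d) * (H (τ x) x - c - gain ΔS ξ (τ x) x)) ∂μ) + ∫ _x, (d ^ 2 : ℝ) ∂μ :=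
        integral_add (hint.add (hf1.const_mul (2 * d))) (integrable_const _)
      have e2 : ∫ x, ((H (τ x) x - c - gain ΔS ξ (τ x) x) ^ 2
            + (2 * d) * (H (τ x) x - c - gain ΔS ξ (τ x) x)) ∂μ
          = (∫ x, (H (τ x) x - c - gain ΔS ξ (τ x) x) ^ 2 ∂μ)
            + ∫ x, (2 * d) * (H (τ x) x - c - gain ΔS ξ (τ x) x) ∂μ :=
        integral_add hint (hf1.const_mul (2 * d))
      rw [integral_congr_ae (Filter.Eventually.of_forall h1), e1, e2, integral_const_mul,
        hfval, integral_const]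
      simp only [measure_univ, ENNReal.toReal_one, probReal_univ, smul_eq_mul, one_mul, hd]
      ring
    rw [hexp]
    have : (0 : ℝ) ≤ d ^ 2 := sq_nonneg d
    linarith
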